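/- If c = d = 0 and a ≠ 0 and b ≠ 0, then V has the unique fixed point (0,0,1) in S², and for every (x,y,z) ∈ S², V^n(x,y,z) → (0,0,1) as n → ∞. -/
import Mathlib


open Filter Topology

noncomputable def V (a b c d : ℝ) (p : ℝ × ℝ × ℝ) : ℝ × ℝ × ℝ :=
  (p.1 * (1 - b + d * p.2.1),
   p.2.1 * (1 - a - d * p.1 + c * p.2.2),
   p.2.2 * (1 - c * p.2.1) + a * p.2.1 + b * p.1)

def S2 : Set (ℝ × ℝ × ℝ) :=
  {p | 0 ≤ p.1 ∧ 0 ≤ p.2.1 ∧ 0 ≤ p.2.2 ∧ p.1 + p.2.1 + p.2.2 = 1}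

lemma iter_formula (a b : ℝ) (p : ℝ × ℝ × ℝ) (n : ℕ) :
    (V a b 0 0)^[n] p =
      (p.1 * (1 - b) ^ n, p.2.1 * (1 - a) ^ n,
        p.2.2 + p.1 * (1 - (1 - b) ^ n) + p.2.1 * (1 - (1 - a) ^ n)) := by
  induction n with
  | zero => simp
  | succ n ih =>
    rw [Function.iterate_succ_apply', ih]
    simp only [V, Prod.mk.injEq]
    refine ⟨by ring, by ring, by ring⟩

theorem stmt3 (a b : ℝ) (ha0 : 0 < a) (ha1 : a ≤ 1) (hb0 : 0 < b) (hb1 : b ≤ 1) :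
    {p ∈ S2 | V a b 0 0 p = p} = {((0 : ℝ), (0 : ℝ), (1 : ℝ))} ∧
    ∀ p ∈ S2, Tendsto (fun n => (V a b 0 0)^[n] p) atTop
      (𝓝 ((0 : ℝ), (0 : ℝ), (1 : ℝ))) := by
  constructor
  · ext ⟨x, y, z⟩
    simp only [Set.mem_setOf_eq, Set.mem_sep_iff, S2, V, Prod.mk.injEq,
      Set.mem_singleton_iff]
    constructor
    · rintro ⟨⟨hx, hy, hz, hsum⟩, h1, h2, h3⟩
      have hx0 : x = 0 := by
        have : x * b = 0 := by nlinarith [h1]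
        rcases mul_eq_zero.mp this with h | h
        · exact h
        · exact absurd h (ne_of_gt hb0)
      have hy0 : y = 0 := by
        have : y * a = 0 := by nlinarith [h2]
        rcases mul_eq_zero.mp this with h | h
        · exact h
        · exact absurd h (ne_of_gt ha0)
      refine ⟨hx0, hy0, by linarith⟩
    · rintro ⟨hx, hy, hz⟩
      subst hx; subst hy; subst hz
      norm_num
  · rintro ⟨x, y, z⟩ ⟨hx, hy, hz, hsum⟩
    have hconv : ∀ c : ℝ, 0 < c → c ≤ 1 →
        Tendsto (fun n : ℕ => (1 - c) ^ n) atTop (𝓝 0) := by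
      intro c hc0 hc1
      apply tendsto_pow_atTop_nhds_zero_of_lt_one <;> linarith
    have hb' := hconv b hb0 hb1
    have ha' := hconv a ha0 ha1
    simp only [iter_formula]
    refine Tendsto.prodMk_nhds ?_ (Tendsto.prodMk_nhds ?_ ?_)
    · simpa using (tendsto_const_nhds.mul hb')
    · simpa using (tendsto_const_nhds.mul ha')
    · have : Tendsto (fun n : ℕ => z + x * (1 - (1 - b) ^ n) + y * (1 - (1 - a) ^ n))
          atTop (𝓝 (z + x * (1 - 0) + y * (1 - 0))) := by
        exact (tendsto_const_nhds.add (tendsto_const_nhds.mul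
          (tendsto_const_nhds.sub hb'))).add
          (tendsto_const_nhds.mul (tendsto_const_nhds.sub ha'))
      convert this using 2
      linarith
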